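/- Let $d\ge 1$, $\mathbf{w}$ a weight in $\mathbb{R}^d$ with $w_1\ge\dots\ge w_d>0$, $\sum w_i=1$, let $\mathfrak{m}\ge 0$ and $\theta_i:\mathbb{R}\to\mathbb{R}$ be $\mathfrak{m}$-Lipschitz functions for $1\le i\le d$. Fix $0<\beta, r_0, c, \mathfrak{q}<1$ and $n\in\mathbb{N}$. Let $\mathbf{v}=\mathbf{p}/m\in\mathbb{Q}^d$ with integer denominator $m$ satisfying $c r_0^{-1}\beta^{-(n+1)}\le m^{1+w_1}<c r_0^{-1}\beta^{-(n+2)}$ and $m\ge 3c^{-1}\beta^{-1}r_0^{-1}$. Let $R$ be a rectangle in $\mathbb{R}^d$ with side length $\frac{\mathfrak{q}r_0 c}{\mathfrak{m}\beta^{-\frac{(n+2)w_i}{1+w_1}}}$ in the $i$-th direction, containing a point $\mathbf{b}=(b_i)$, and set $\theta_i^\sharp := \theta_i(b_i)$. Then every $\mathbf{x}\in R$ satisfying $|x_i - \frac{p_i+\theta_i^\sharp}{m}|<\frac{\mathfrak{q}c}{m^{1+w_i}}$ for all $i$ also satisfies $|x_i-\frac{p_i+\theta_i(x_i)}{m}|<\frac{2\mathfrak{q}c}{m^{1+w_i}}$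 for all $i$; conversely every $\mathbf{x}\in R$ with $|x_i-\frac{p_i+\theta_i(x_i)}{m}|<\frac{2\mathfrak{q}c}{m^{1+w_i}}$ for all $i$ satisfies $|x_i-\frac{p_i+\theta_i^\sharp}{m}|<\frac{4\mathfrak{q}c}{m^{1+w_i}}$ for all $i$. -/

import Mathlib

/-- Comparison between the inhomogeneous dangerous set (with the Lipschitz shift evaluated
at the variable point) and its frozen version (shift evaluated at a fixed base point of a
small rectangle): on the rectangle, the frozen set is contained in the doubled true set,
and the doubled true set is contained in the quadrupled frozen set. -/
theorem stmt_14 (d : ℕ) (hd : 0 < d) (w : Fin d → ℝ)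
    (hwmono : ∀ i j : Fin d, i ≤ j → w j ≤ w i) (hwpos : ∀ i, 0 < w i)
    (hwsum : ∑ i, w i = 1)
    (𝔪 : ℝ) (h𝔪 : 0 < 𝔪)
    (θ : Fin d → ℝ → ℝ) (hθ : ∀ (i : Fin d) (x y : ℝ), |θ i x - θ i y| ≤ 𝔪 * |x - y|)
    (β r₀ c 𝔮 : ℝ) (hβ : β ∈ Set.Ioo (0:ℝ) 1) (hr₀ : r₀ ∈ Set.Ioo (0:ℝ) 1)
    (hc : c ∈ Set.Ioo (0:ℝ) 1) (h𝔮 : 𝔮 ∈ Set.Ioo (0:ℝ) 1)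
    (n : ℕ) (m : ℕ) (p : Fin d → ℤ) (hm1 : 1 ≤ m)
    (hmlo : c * r₀⁻¹ * β ^ (-((n : ℝ) + 1)) ≤ (m : ℝ) ^ (1 + w ⟨0, hd⟩))
    (hmhi : (m : ℝ) ^ (1 + w ⟨0, hd⟩) < c * r₀⁻¹ * β ^ (-((n : ℝ) + 2)))
    (hmbig : 3 * c⁻¹ * β⁻¹ * r₀⁻¹ ≤ (m : ℝ))
    (L : Fin d → ℝ) (hL : ∀ i, L i = 𝔮 * r₀ * c / (𝔪 * β ^ (-(((n : ℝ) + 2) * w i / (1 + w ⟨0, hd⟩)))))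
    (lo : Fin d → ℝ) (R : Set (Fin d → ℝ))
    (hR : R = Set.univ.pi (fun i => Set.Icc (lo i) (lo i + L i)))
    (b : Fin d → ℝ) (hb : b ∈ R)
    (θs : Fin d → ℝ) (hθs : ∀ i, θs i = θ i (b i)) :
    (∀ x ∈ R, (∀ i, |x i - ((p i : ℝ) + θs i) / m| < 𝔮 * c / (m : ℝ) ^ (1 + w i)) →
      ∀ i, |x i - ((p i : ℝ) + θ i (x i)) / m| < 2 * 𝔮 * c / (m : ℝ) ^ (1 + w i)) ∧
    (∀ x ∈ R, (∀ i, |x i - ((p i : ℝ) + θ i (x i)) / m| < 2 * 𝔮 * c / (m : ℝ) ^ (1 + w i)) →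
      ∀ i, |x i - ((p i : ℝ) + θs i) / m| < 4 * 𝔮 * c / (m : ℝ) ^ (1 + w i)) := by
  obtain ⟨hβ0, hβ1⟩ := hβ
  obtain ⟨hr0, hr1⟩ := hr₀
  obtain ⟨hc0, hc1⟩ := hc
  obtain ⟨hq0, hq1⟩ := h𝔮
  have hw1 : 0 < w ⟨0, hd⟩ := hwpos _
  have hm0 : (0:ℝ) < m := by exact_mod_cast hm1
  -- key estimate : |θ i (x i) - θs i| / m ≤ 𝔮 * c / m ^ (1 + w i)
  have key : ∀ x ∈ R, ∀ i, |θ i (x i) - θs i| / m ≤ 𝔮 * c / (m:ℝ) ^ (1 + w i) := by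
    intro x hx i
    have hwi : 0 < w i := hwpos i
    have hwile : w i ≤ w ⟨0, hd⟩ := hwmono ⟨0, hd⟩ i (Fin.le_def.mpr (Nat.zero_le _))
    have h1w : (0:ℝ) < 1 + w ⟨0, hd⟩ := by linarith
    set s : ℝ := w i / (1 + w ⟨0, hd⟩) with hs
    have hs0 : 0 ≤ s := by positivity
    have hs1 : s ≤ 1 := by rw [hs, div_le_one h1w]; linarith
    set E : ℝ := ((n : ℝ) + 2) * w i / (1 + w ⟨0, hd⟩) with hE
    have hE0 : 0 ≤ E := by positivity
    have hmw : (m:ℝ) ^ (w i) ≤ (c * r₀⁻¹ * β ^ (-((n:ℝ)+2))) ^ s := by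
      have h1 : (m:ℝ) ^ (w i) = ((m:ℝ) ^ (1 + w ⟨0, hd⟩)) ^ s := by
        rw [← Real.rpow_mul hm0.le]
        congr 1
        rw [hs]
        field_simp
      rw [h1]
      exact Real.rpow_le_rpow (by positivity) hmhi.le hs0
    have hkey : r₀ * β ^ E * (m:ℝ) ^ (w i) ≤ 1 := by
      have h2 : (c * r₀⁻¹ * β ^ (-((n:ℝ)+2))) ^ s
          = c ^ s * (r₀ ^ s)⁻¹ * β ^ (-E) := by
        rw [Real.mul_rpow (by positivity) (by positivity),
            Real.mul_rpow hc0.le (by positivity),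
            Real.inv_rpow hr0.le, ← Real.rpow_mul hβ0.le]
        congr 1
        rw [hE, hs]
        ring
      have h3 : r₀ * β ^ E * (m:ℝ) ^ (w i) ≤ r₀ * β ^ E * (c ^ s * (r₀ ^ s)⁻¹ * β ^ (-E)) := by
        rw [← h2]
        exact mul_le_mul_of_nonneg_left hmw (by positivity)
      have hβE : (0:ℝ) < β ^ E := by positivity
      have hrs : (0:ℝ) < r₀ ^ s := by positivity
      have h4 : r₀ * β ^ E * (c ^ s * (r₀ ^ s)⁻¹ * β ^ (-E)) = c ^ s * r₀ ^ (1 - s) := by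
        rw [Real.rpow_neg hβ0.le, Real.rpow_sub hr0, Real.rpow_one]
        field_simp
      have hc' : c ^ s ≤ 1 := Real.rpow_le_one hc0.le hc1.le hs0
      have hr' : r₀ ^ (1 - s) ≤ 1 := Real.rpow_le_one hr0.le hr1.le (by linarith)
      have hcnn : (0:ℝ) ≤ c ^ s := by positivity
      have hrnn : (0:ℝ) ≤ r₀ ^ (1 - s) := by positivity
      calc r₀ * β ^ E * (m:ℝ) ^ (w i) ≤ c ^ s * r₀ ^ (1 - s) := h4 ▸ h3
        _ ≤ 1 := by nlinarith
    -- geometry: |x i - b i| ≤ L i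
    rw [hR] at hx hb
    have hxi := hx i (Set.mem_univ i)
    have hbi := hb i (Set.mem_univ i)
    have habs : |x i - b i| ≤ L i :=
      abs_le.mpr ⟨by linarith [hxi.1, hxi.2, hbi.1, hbi.2],
                  by linarith [hxi.1, hxi.2, hbi.1, hbi.2]⟩
    have hd1 : |θ i (x i) - θs i| ≤ 𝔪 * L i := by
      rw [hθs]
      exact (hθ i _ _).trans (mul_le_mul_of_nonneg_left habs h𝔪.le)
    have hmL : 𝔪 * L i = 𝔮 * r₀ * c * β ^ E := by
      rw [hL, Real.rpow_neg hβ0.le]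
      have hβE : (0:ℝ) < β ^ E := by positivity
      field_simp
      rw [hE]
    have hsplit : (m:ℝ) ^ (1 + w i) = m * (m:ℝ) ^ (w i) := by
      rw [Real.rpow_add hm0, Real.rpow_one]
    calc |θ i (x i) - θs i| / m ≤ (𝔮 * r₀ * c * β ^ E) / m := by
          rw [← hmL]; gcongr
      _ ≤ 𝔮 * c / (m:ℝ) ^ (1 + w i) := by
          rw [div_le_div_iff₀ hm0 (by positivity), hsplit]
          have h5 := mul_le_mul_of_nonneg_left hkey
            (show (0:ℝ) ≤ 𝔮 * c * m by positivity)
          nlinarith [h5]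
  constructor
  · intro x hx h i
    have h1 := h i
    have h2 := key x hx i
    have hmne : (m:ℝ) ≠ 0 := ne_of_gt hm0
    have e : x i - ((p i : ℝ) + θ i (x i)) / m
        = (x i - ((p i : ℝ) + θs i) / m) + (θs i - θ i (x i)) / m := by
      field_simp
      ring
    have habsB : |(θs i - θ i (x i)) / m| = |θ i (x i) - θs i| / m := by
      rw [abs_div, abs_sub_comm, abs_of_pos hm0]
    have hineq : |x i - ((p i : ℝ) + θ i (x i)) / m|
        ≤ |x i - ((p i : ℝ) + θs i) / m| + |θ i (x i) - θs i| / m := by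
      rw [e, ← habsB]
      exact abs_add_le _ _
    have : 2 * 𝔮 * c / (m:ℝ) ^ (1 + w i)
        = 𝔮 * c / (m:ℝ) ^ (1 + w i) + 𝔮 * c / (m:ℝ) ^ (1 + w i) := by ring
    linarith
  · intro x hx h i
    have h1 := h i
    have h2 := key x hx i
    have hmne : (m:ℝ) ≠ 0 := ne_of_gt hm0
    have e : x i - ((p i : ℝ) + θs i) / m
        = (x i - ((p i : ℝ) + θ i (x i)) / m) + (θ i (x i) - θs i) / m := by
      field_simp
      ring
    have habsB : |(θ i (x i) - θs i) / m| = |θ i (x i) - θs i| / m := by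
      rw [abs_div, abs_of_pos hm0]
    have hineq : |x i - ((p i : ℝ) + θs i) / m|
        ≤ |x i - ((p i : ℝ) + θ i (x i)) / m| + |θ i (x i) - θs i| / m := by
      rw [e, ← habsB]
      exact abs_add_le _ _
    have hpos : 0 < 𝔮 * c / (m:ℝ) ^ (1 + w i) := by positivity
    have : 4 * 𝔮 * c / (m:ℝ) ^ (1 + w i)
        = 2 * 𝔮 * c / (m:ℝ) ^ (1 + w i) + 𝔮 * c / (m:ℝ) ^ (1 + w i)
          + 𝔮 * c / (m:ℝ) ^ (1 + w i) := by ring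
    linarith
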